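/- Let σx = !![0, 1; 1, 0] and σz = !![1, 0; 0, −1] (as 2×2 complex matrices), let X be any m×m complex matrix, and let t be real. Set H = σx ⊗ₖ X and V = σz ⊗ₖ 1. Then V * Matrix.exp((−(i·t)) • H) * V * Matrix.exp((−(i·t)) • H) = 1. -/

import Mathlib

open scoped Matrix Kronecker

/-- The echo identity for the dephasing example: with `H = σx ⊗ X` and `V = σz ⊗ 𝟙`,
applying `V`, evolving for the same time, applying `V` again and evolving once more
returns the identity. -/
theorem dephasing_echo {m : ℕ} (X : Matrix (Fin m) (Fin m) ℂ) (t : ℝ)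
    (σx σz : Matrix (Fin 2) (Fin 2) ℂ)
    (hσx : σx = !![0, 1; 1, 0]) (hσz : σz = !![1, 0; 0, -1])
    (H V : Matrix (Fin 2 × Fin m) (Fin 2 × Fin m) ℂ)
    (hH : H = σx ⊗ₖ X) (hV : V = σz ⊗ₖ (1 : Matrix (Fin m) (Fin m) ℂ)) :
    V * NormedSpace.exp ((-(Complex.I * (t : ℂ))) • H) * V *
        NormedSpace.exp ((-(Complex.I * (t : ℂ))) • H) = 1 := by
  set s : ℂ := -(Complex.I * (t : ℂ)) with hs
  have hzz : σz * σz = 1 := by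
    subst hσz
    rw [Matrix.one_fin_two]
    norm_num [Matrix.mul_fin_two]
  have hzxz : σz * σx * σz = -σx := by
    subst hσx hσz
    norm_num [Matrix.mul_fin_two]
  have hVV : V * V = 1 := by
    rw [hV, ← Matrix.mul_kronecker_mul, hzz, one_mul, Matrix.one_kronecker_one]
  have hVHV : V * H * V = -H := by
    rw [hV, hH, ← Matrix.mul_kronecker_mul, ← Matrix.mul_kronecker_mul, hzxz, one_mul, mul_one]
    ext i j
    simp [Matrix.kroneckerMap_apply]
  have hVinv : V⁻¹ = V := Matrix.inv_eq_right_inv hVV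
  have hVU : IsUnit V := ⟨⟨V, V, hVV, hVV⟩, rfl⟩
  have key : V * NormedSpace.exp (s • H) * V = NormedSpace.exp (-(s • H)) := by
    have h := Matrix.exp_conj V (s • H) hVU
    rw [hVinv] at h
    rw [← h]
    congr 1
    rw [Matrix.mul_smul, Matrix.smul_mul, hVHV, smul_neg]
  calc V * NormedSpace.exp (s • H) * V * NormedSpace.exp (s • H)
      = NormedSpace.exp (-(s • H)) * NormedSpace.exp (s • H) := by rw [key]
    _ = NormedSpace.exp (-(s • H) + s • H) := by
        rw [Matrix.exp_add_of_commute _ _ ((Commute.refl (s • H)).neg_left)]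
    _ = 1 := by rw [neg_add_cancel, NormedSpace.exp_zero]
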